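/- Let x₁, …, xₙ be distinct points of an open set Ω ⊆ ℝ^d, and φⱼ(x) = φ(‖x − xⱼ‖₂) with φ(r) = r^{2k} log r (thin-plate spline, φ(0)=0). Then each φⱼ is real analytic on Ω \ {xⱼ}, and the functions φ₁, …, φₙ are linearly independent on Ω. -/

import Mathlib

open Filter Topology

private lemma analyticAt_real_log {x : ℝ} (hx : 0 < x) : AnalyticAt ℝ Real.log x := by
  have hc : AnalyticAt ℂ Complex.log (x : ℂ) :=
    analyticAt_clog (Complex.ofReal_mem_slitPlane.2 hx)
  have h1 : AnalyticAt ℝ (fun t : ℝ => Complex.log (t : ℂ)) x :=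
    hc.restrictScalars.comp (Complex.ofRealCLM.analyticAt x)
  have h2 : AnalyticAt ℝ (fun t : ℝ => (Complex.log (t : ℂ)).re) x :=
    (Complex.reCLM.analyticAt _).comp h1
  exact h2.congr (Filter.Eventually.of_forall fun t => Complex.log_ofReal_re t)

private lemma tps_analyticAt {d : ℕ} (k : ℕ) (z : EuclideanSpace ℝ (Fin d))
    {y : EuclideanSpace ℝ (Fin d)} (hy : y ≠ z) :
    AnalyticAt ℝ (fun w => ‖w - z‖ ^ (2 * k) * Real.log ‖w - z‖) y := by
  set q : EuclideanSpace ℝ (Fin d) → ℝ := fun w => @inner ℝ _ _ (w - z) (w - z) with hqdef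
  have hq : AnalyticAt ℝ q y := by
    have hb := (innerSL ℝ (E := EuclideanSpace ℝ (Fin d))).analyticAt_bilinear (y - z, y - z)
    have hl : AnalyticAt ℝ (fun w : EuclideanSpace ℝ (Fin d) => (w - z, w - z)) y :=
      ((analyticAt_id.sub analyticAt_const).prod (analyticAt_id.sub analyticAt_const))
    have hcomp := AnalyticAt.comp (x := y) hb hl
    exact hcomp.congr (Filter.Eventually.of_forall fun w => rfl)
  have hq0 : 0 < q y := by
    show (0:ℝ) < @inner ℝ _ _ (y - z) (y - z)
    rw [real_inner_self_eq_norm_sq]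
    have : 0 < ‖y - z‖ := norm_pos_iff.2 (sub_ne_zero.2 hy)
    positivity
  have hA : AnalyticAt ℝ (fun w => q w ^ k * ((1 : ℝ) / 2 * Real.log (q w))) y :=
    (hq.pow k).mul (analyticAt_const.mul ((analyticAt_real_log hq0).comp hq))
  have key : ∀ w, q w ^ k * ((1 : ℝ) / 2 * Real.log (q w))
      = ‖w - z‖ ^ (2 * k) * Real.log ‖w - z‖ := by
    intro w
    have hqw : q w = ‖w - z‖ ^ 2 := real_inner_self_eq_norm_sq _
    rw [hqw, ← pow_mul, Real.log_pow]
    push_cast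
    ring
  exact (funext key) ▸ hA

theorem tps_basis_analytic_and_linearly_independent
    (d n k : ℕ) (hd : 1 ≤ d) (hk : 1 ≤ k)
    (Ω : Set (EuclideanSpace ℝ (Fin d))) (hΩ : IsOpen Ω)
    (x : Fin n → EuclideanSpace ℝ (Fin d))
    (hx : ∀ j, x j ∈ Ω) (hinj : Function.Injective x)
    (φ : Fin n → EuclideanSpace ℝ (Fin d) → ℝ)
    (hφ : ∀ j y, φ j y = ‖y - x j‖ ^ (2 * k) * Real.log ‖y - x j‖) :
    (∀ j, AnalyticOnNhd ℝ (φ j) (Ω \ {x j})) ∧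
      ∀ c : Fin n → ℝ, (∀ y ∈ Ω, ∑ j, c j * φ j y = 0) → ∀ j, c j = 0 := by
  have hA : ∀ (j : Fin n) (y : EuclideanSpace ℝ (Fin d)), y ≠ x j → AnalyticAt ℝ (φ j) y := by
    intro j y hy
    have hφj : φ j = fun w => ‖w - x j‖ ^ (2 * k) * Real.log ‖w - x j‖ := funext (hφ j)
    rw [hφj]
    exact tps_analyticAt k (x j) hy
  refine ⟨fun j y hy => hA j y hy.2, ?_⟩
  intro c hc j
  by_contra hcj
  obtain ⟨ε, hε, hball⟩ := Metric.isOpen_iff.mp hΩ (x j) (hx j)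
  set v : EuclideanSpace ℝ (Fin d) := EuclideanSpace.single (⟨0, hd⟩ : Fin d) (1 : ℝ) with hv
  have hnv : ‖v‖ = 1 := by rw [hv, EuclideanSpace.norm_single]; norm_num
  set G : ℝ → ℝ := fun t => -∑ i ∈ Finset.univ.erase j, c i * φ i (x j + t • v) with hGdef
  have hline : AnalyticAt ℝ (fun t : ℝ => x j + t • v) 0 :=
    analyticAt_const.add ((ContinuousLinearMap.toSpanSingleton ℝ v).analyticAt 0)
  have hGan : AnalyticAt ℝ G 0 := by
    apply AnalyticAt.neg
    apply Finset.analyticAt_fun_sum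
    intro i hi
    apply analyticAt_const.mul
    have hxij : x j ≠ x i := fun h => Finset.ne_of_mem_erase hi (hinj h).symm
    have hAi : AnalyticAt ℝ (φ i) (x j + (0 : ℝ) • v) := by
      simpa using hA i (x j) hxij
    have hcomp := AnalyticAt.comp (x := (0:ℝ)) hAi hline
    simpa [Function.comp_def] using hcomp
  have hEq : ∀ t : ℝ, |t| < ε → G t = c j * (t ^ (2 * k) * Real.log |t|) := by
    intro t ht
    have hmem : x j + t • v ∈ Ω := by
      apply hball
      simp only [Metric.mem_ball, dist_eq_norm, add_sub_cancel_left, norm_smul, hnv,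
        Real.norm_eq_abs, mul_one]
      exact ht
    have h0 := hc _ hmem
    rw [← Finset.add_sum_erase _ _ (Finset.mem_univ j)] at h0
    have hφjv : φ j (x j + t • v) = t ^ (2 * k) * Real.log |t| := by
      rw [hφ]
      have hn : ‖x j + t • v - x j‖ = |t| := by
        rw [add_sub_cancel_left, norm_smul, hnv, Real.norm_eq_abs, mul_one]
      rw [hn, pow_mul, ← abs_pow, abs_pow, sq_abs, ← pow_mul]
    rw [hφjv] at h0
    show -∑ i ∈ Finset.univ.erase j, c i * φ i (x j + t • v)
        = c j * (t ^ (2 * k) * Real.log |t|)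
    linarith
  have hsmall : ∀ᶠ t in 𝓝[>] (0 : ℝ), t ∈ Set.Ioo 0 (min ε 1) :=
    Ioo_mem_nhdsGT (lt_min hε one_pos)
  cases ho : analyticOrderAt G 0 with
  | top =>
    have h := analyticOrderAt_eq_top.mp ho
    have h' : ∀ᶠ t in 𝓝[>] (0 : ℝ), G t = 0 := nhdsWithin_le_nhds h
    have hfalse : ∀ᶠ t in 𝓝[>] (0 : ℝ), False := by
      filter_upwards [h', hsmall] with t h1 h2
      obtain ⟨ht0, htm⟩ := h2
      have htε : |t| < ε := by rw [abs_of_pos ht0]; exact htm.trans_le (min_le_left _ _)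
      have h3 := hEq t htε
      rw [h1, abs_of_pos ht0] at h3
      have hlt : Real.log t < 0 := Real.log_neg ht0 (htm.trans_le (min_le_right _ _))
      have hp : (0 : ℝ) < t ^ (2 * k) := pow_pos ht0 _
      rcases mul_eq_zero.mp h3.symm with h | h
      · exact hcj h
      · rcases mul_eq_zero.mp h with h | h
        · exact absurd h (ne_of_gt hp)
        · exact absurd h (ne_of_lt hlt)
    rcases hfalse.exists with ⟨_, hf⟩
    exact hf
  | coe m =>
    obtain ⟨g, hgan, hg0, hgev⟩ := hGan.analyticOrderAt_eq_natCast.mp ho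
    have hgev' : ∀ᶠ t in 𝓝[>] (0 : ℝ), G t = t ^ m * g t := by
      have := nhdsWithin_le_nhds (s := Set.Ioi (0:ℝ)) hgev
      filter_upwards [this] with t h1
      simpa using h1
    have hkey : ∀ᶠ t in 𝓝[>] (0 : ℝ),
        t ^ m * g t = c j * (t ^ (2 * k) * Real.log t) ∧ 0 < t ∧ t < 1 := by
      filter_upwards [hgev', hsmall] with t h1 h2
      obtain ⟨ht0, htm⟩ := h2
      have htε : |t| < ε := by rw [abs_of_pos ht0]; exact htm.trans_le (min_le_left _ _)
      have h3 := hEq t htε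
      rw [abs_of_pos ht0] at h3
      exact ⟨h1 ▸ h3, ht0, htm.trans_le (min_le_right _ _)⟩
    by_cases hm : m < 2 * k
    · have hev : ∀ᶠ t in 𝓝[>] (0 : ℝ), g t = c j * (t ^ (2 * k - m) * Real.log t) := by
        filter_upwards [hkey] with t ⟨h1, ht0, _⟩
        have hsplit : t ^ (2 * k) = t ^ m * t ^ (2 * k - m) := by
          rw [← pow_add]
          congr 1
          omega
        rw [hsplit] at h1
        have h2 : t ^ m * g t = t ^ m * (c j * (t ^ (2 * k - m) * Real.log t)) := by
          rw [h1]; ring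
        exact mul_left_cancel₀ (pow_ne_zero m (ne_of_gt ht0)) h2
      have l1 : Tendsto g (𝓝[>] (0 : ℝ)) (𝓝 (g 0)) :=
        (hgan.continuousAt.continuousWithinAt (s := Set.Ioi 0)).tendsto
      have l2 : Tendsto (fun t : ℝ => c j * (t ^ (2 * k - m) * Real.log t))
          (𝓝[>] (0 : ℝ)) (𝓝 0) := by
        have hr : (0 : ℝ) < (2 * k - m : ℕ) := by
          have : 0 < 2 * k - m := by omega
          exact_mod_cast this
        have h := tendsto_log_mul_rpow_nhdsGT_zero hr
        have h' : Tendsto (fun t : ℝ => t ^ (2 * k - m) * Real.log t) (𝓝[>] (0 : ℝ)) (𝓝 0) := by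
          apply h.congr'
          filter_upwards [self_mem_nhdsWithin] with t ht
          rw [Real.rpow_natCast]
          ring
        simpa using h'.const_mul (c j)
      have : g 0 = 0 := tendsto_nhds_unique (l1.congr' hev) l2
      exact hg0 this
    · push_neg at hm
      have hev : ∀ᶠ t in 𝓝[>] (0 : ℝ), t ^ (m - 2 * k) * g t / c j = Real.log t := by
        filter_upwards [hkey] with t ⟨h1, ht0, _⟩
        have hsplit : t ^ m = t ^ (2 * k) * t ^ (m - 2 * k) := by
          rw [← pow_add]
          congr 1
          omega
        rw [hsplit] at h1
        have h2 : t ^ (2 * k) * (t ^ (m - 2 * k) * g t) = t ^ (2 * k) * (c j * Real.log t) := by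
          rw [← mul_assoc, h1]; ring
        have h3 := mul_left_cancel₀ (pow_ne_zero (2 * k) (ne_of_gt ht0)) h2
        rw [h3]
        field_simp
      have l1 : Tendsto (fun t : ℝ => t ^ (m - 2 * k) * g t / c j) (𝓝[>] (0 : ℝ))
          (𝓝 ((0 : ℝ) ^ (m - 2 * k) * g 0 / c j)) := by
        apply Tendsto.div_const
        exact ((continuous_pow (m - 2 * k)).continuousWithinAt.tendsto).mul
          (hgan.continuousAt.continuousWithinAt (s := Set.Ioi 0)).tendsto
      exact not_tendsto_nhds_of_tendsto_atBot Real.tendsto_log_nhdsGT_zero _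
        (l1.congr' hev)
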